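/- Fix R > 0 and for k > 0 define y_k(z) = I₀(√k·|z|)/I₀(√k·R) on the closed disk {z ∈ ℂ : |z| ≤ R}. Then: (1) for every k > 0 and every z with |z| ≤ R, e^{−√k·(R−|z|)} ≤ y_k(z); and (2) there exist constants C > 0 and k₀ > 0 (depending only on R) such that for every k ≥ k₀ and every z with |z| ≤ R, y_k(z) ≤ C · k^{1/4} · e^{−√k·(R−|z|)}. -/

import Mathlib

/-- The modified Bessel function of the first kind of order zero,
`I₀(x) = Σ_{m=0}^∞ (x/2)^{2m}/(m!)²`. -/
noncomputable def besselI0 (x : ℝ) : ℝ :=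
  ∑' m : ℕ, (x / 2) ^ (2 * m) / ((m.factorial : ℝ)) ^ 2

/-- `y_k(z) = I₀(√k·|z|)/I₀(√k·R)` on the closed disk of radius `R`. -/
noncomputable def yFun (R k : ℝ) (z : ℂ) : ℝ :=
  besselI0 (Real.sqrt k * ‖z‖) / besselI0 (Real.sqrt k * R)

open Real MeasureTheory intervalIntegral Finset

lemma summable_besselI0 (x : ℝ) :
    Summable (fun m : ℕ => (x / 2) ^ (2 * m) / ((m.factorial : ℝ)) ^ 2) := by
  refine Summable.of_nonneg_of_le (fun m => by rw [pow_mul]; positivity) (fun m => ?_)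
    (Real.summable_pow_div_factorial ((x / 2) ^ 2))
  rw [pow_mul]
  have h1 : (0:ℝ) < (m.factorial : ℝ) := by exact_mod_cast m.factorial_pos
  have h0 : (1:ℝ) ≤ (m.factorial : ℝ) := by exact_mod_cast m.factorial_pos
  have h2 : (m.factorial : ℝ) ≤ ((m.factorial : ℝ)) ^ 2 := by nlinarith
  gcongr

lemma prod_eq_factorial (m : ℕ) :
    ∏ i ∈ Finset.range m, (2 * (i:ℝ) + 1) / (2 * i + 2)
      = ((2*m).factorial : ℝ) / (4 ^ m * ((m.factorial : ℝ))^2) := by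
  induction m with
  | zero => simp
  | succ n ih =>
    rw [Finset.prod_range_succ, ih]
    have e1 : 2*(n+1) = (2*n+1)+1 := by ring
    have h1 : ((2*(n+1)).factorial : ℝ) = (2*n).factorial * ((2*n:ℝ)+1) * ((2*n:ℝ)+2) := by
      rw [e1]
      push_cast [Nat.factorial_succ]
      ring
    have h2 : (((n+1)).factorial : ℝ) = (n.factorial : ℝ) * ((n:ℝ)+1) := by
      push_cast [Nat.factorial_succ]
      ring
    have hf : ((n.factorial : ℝ)) ≠ 0 := by exact_mod_cast n.factorial_ne_zero
    rw [h1, h2]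
    have h4 : ((4:ℝ)) ^ (n+1) = 4 * 4 ^ n := by ring
    field_simp
    ring

lemma integral_cos_pow_odd_pi (m : ℕ) :
    (∫ θ in (0:ℝ)..π, Real.cos θ ^ (2*m+1)) = 0 := by
  have h := integral_sin_pow_mul_cos_pow_odd (a := (0:ℝ)) (b := π) 0 m
  simpa [Real.sin_pi] using h

lemma integral_cos_pow_even_pi (m : ℕ) :
    (∫ θ in (0:ℝ)..π, Real.cos θ ^ (2*m)) = ∫ θ in (0:ℝ)..π, Real.sin θ ^ (2*m) := by
  have hint : ∀ a b : ℝ, IntervalIntegrable (fun x => Real.sin x ^ (2*m)) volume a b :=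
    fun a b => (Real.continuous_sin.pow _).intervalIntegrable a b
  have heven : ∀ x : ℝ, Real.sin (-x) ^ (2*m) = Real.sin x ^ (2*m) := by
    intro x
    rw [Real.sin_neg, pow_mul, pow_mul, neg_pow]
    ring
  have h1 : (∫ θ in (0:ℝ)..π, Real.cos θ ^ (2*m))
      = ∫ x in (-(π/2))..(π/2), Real.sin x ^ (2*m) := by
    have := intervalIntegral.integral_comp_sub_left (a := (0:ℝ)) (b := π)
      (fun x => Real.sin x ^ (2*m)) (π/2)
    simp only [Real.sin_pi_div_two_sub] at this
    rw [this]
    congr 1 <;> ring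
  have h2 : (∫ x in (-(π/2))..(0:ℝ), Real.sin x ^ (2*m))
      = ∫ x in (0:ℝ)..(π/2), Real.sin x ^ (2*m) := by
    have := intervalIntegral.integral_comp_neg (a := (0:ℝ)) (b := π/2)
      (fun x => Real.sin x ^ (2*m))
    simp only [heven, neg_zero] at this
    rw [← this]
  have h3 : (∫ x in (π/2)..π, Real.sin x ^ (2*m))
      = ∫ x in (0:ℝ)..(π/2), Real.sin x ^ (2*m) := by
    have := intervalIntegral.integral_comp_sub_left (a := (0:ℝ)) (b := π/2)
      (fun x => Real.sin x ^ (2*m)) π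
    simp only [Real.sin_pi_sub] at this
    rw [this]
    congr 1 <;> ring
  have hsplit1 : (∫ x in (-(π/2))..(π/2), Real.sin x ^ (2*m))
      = (∫ x in (-(π/2))..(0:ℝ), Real.sin x ^ (2*m)) + ∫ x in (0:ℝ)..(π/2), Real.sin x ^ (2*m) :=
    (intervalIntegral.integral_add_adjacent_intervals (hint _ _) (hint _ _)).symm
  have hsplit2 : (∫ x in (0:ℝ)..π, Real.sin x ^ (2*m))
      = (∫ x in (0:ℝ)..(π/2), Real.sin x ^ (2*m)) + ∫ x in (π/2)..π, Real.sin x ^ (2*m) :=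
    (intervalIntegral.integral_add_adjacent_intervals (hint _ _) (hint _ _)).symm
  rw [h1, hsplit1, h2, hsplit2, h3]

lemma integral_cos_pow_even_pi' (m : ℕ) :
    (∫ θ in (0:ℝ)..π, Real.cos θ ^ (2*m))
      = π * (((2*m).factorial : ℝ) / (4 ^ m * ((m.factorial : ℝ))^2)) := by
  rw [integral_cos_pow_even_pi, integral_sin_pow_even]
  congr 1
  induction m with
  | zero => simp
  | succ n ih =>
    rw [Finset.prod_range_succ, ih]
    have e1 : 2*(n+1) = (2*n+1)+1 := by ring
    have h1 : ((2*(n+1)).factorial : ℝ) = (2*n).factorial * ((2*n:ℝ)+1) * ((2*n:ℝ)+2) := by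
      rw [e1]
      push_cast [Nat.factorial_succ]
      ring
    have h2 : (((n+1)).factorial : ℝ) = (n.factorial : ℝ) * ((n:ℝ)+1) := by
      push_cast [Nat.factorial_succ]
      ring
    have hf : ((n.factorial : ℝ)) ≠ 0 := by exact_mod_cast n.factorial_ne_zero
    rw [h1, h2]
    field_simp
    ring

lemma exp_tsum (y : ℝ) : Real.exp y = ∑' n : ℕ, y ^ n / (n.factorial : ℝ) := by
  rw [Real.exp_eq_exp_ℝ, NormedSpace.exp_eq_tsum_div]

lemma besselI0_integral (x : ℝ) :
    π * besselI0 x = ∫ θ in (0:ℝ)..π, Real.exp (x * Real.cos θ) := by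
  have hcont : ∀ n : ℕ, Continuous (fun θ : ℝ => (x * Real.cos θ) ^ n / (n.factorial : ℝ)) :=
    fun n => ((continuous_const.mul Real.continuous_cos).pow n).div_const _
  -- swap integral and sum
  have hswap : (∑' n : ℕ, ∫ θ in Set.Ioc (0:ℝ) π, (x * Real.cos θ) ^ n / (n.factorial : ℝ))
      = ∫ θ in Set.Ioc (0:ℝ) π, ∑' n : ℕ, (x * Real.cos θ) ^ n / (n.factorial : ℝ) := by
    apply MeasureTheory.integral_tsum_of_summable_integral_norm
    · exact fun n => (hcont n).integrableOn_Ioc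
    · apply Summable.of_nonneg_of_le
        (fun n => integral_nonneg (fun θ => norm_nonneg _))
        (fun n => ?_) ((Real.summable_pow_div_factorial |x|).mul_left π)
      have hb : ∀ θ : ℝ, ‖(x * Real.cos θ) ^ n / (n.factorial : ℝ)‖
          ≤ |x| ^ n / (n.factorial : ℝ) := by
        intro θ
        have h1 : |x * Real.cos θ| ≤ |x| := by
          rw [abs_mul]
          calc |x| * |Real.cos θ| ≤ |x| * 1 := by
                gcongr; exact Real.abs_cos_le_one θ
            _ = |x| := mul_one _
        rw [norm_div, norm_pow, Real.norm_eq_abs, Real.norm_natCast]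
        have h2 : (0:ℝ) < (n.factorial : ℝ) := by exact_mod_cast n.factorial_pos
        have h3 : |x * Real.cos θ| ^ n ≤ |x| ^ n := pow_le_pow_left₀ (abs_nonneg _) h1 n
        exact div_le_div_of_nonneg_right h3 h2.le
      calc (∫ θ in Set.Ioc (0:ℝ) π, ‖(x * Real.cos θ) ^ n / (n.factorial : ℝ)‖)
          ≤ ∫ _θ in Set.Ioc (0:ℝ) π, |x| ^ n / (n.factorial : ℝ) := by
            apply integral_mono_of_nonneg
            · exact Filter.Eventually.of_forall (fun θ => norm_nonneg _)
            · exact integrableOn_const (by simp [Real.volume_Ioc])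
            · exact Filter.Eventually.of_forall hb
        _ = π * (|x| ^ n / (n.factorial : ℝ)) := by
            rw [MeasureTheory.setIntegral_const, Real.volume_real_Ioc_of_le Real.pi_pos.le, smul_eq_mul]
            rw [sub_zero]
  -- rewrite both sides
  have hIoc : ∀ f : ℝ → ℝ, (∫ θ in (0:ℝ)..π, f θ) = ∫ θ in Set.Ioc (0:ℝ) π, f θ :=
    fun f => intervalIntegral.integral_of_le Real.pi_pos.le
  have hterm : ∀ n : ℕ, (∫ θ in (0:ℝ)..π, (x * Real.cos θ) ^ n / (n.factorial : ℝ))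
      = (x ^ n / (n.factorial : ℝ)) * ∫ θ in (0:ℝ)..π, Real.cos θ ^ n := by
    intro n
    rw [← intervalIntegral.integral_const_mul]
    congr 1
    funext θ
    rw [mul_pow]
    ring
  have hexp : ∀ θ : ℝ, Real.exp (x * Real.cos θ)
      = ∑' n : ℕ, (x * Real.cos θ) ^ n / (n.factorial : ℝ) := fun θ => exp_tsum _
  calc π * besselI0 x
      = ∑' n : ℕ, ∫ θ in (0:ℝ)..π, (x * Real.cos θ) ^ n / (n.factorial : ℝ) := by
        have heven : ∀ m : ℕ,
            (∫ θ in (0:ℝ)..π, (x * Real.cos θ) ^ (2*m) / ((2*m).factorial : ℝ))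
            = π * ((x / 2) ^ (2 * m) / ((m.factorial : ℝ)) ^ 2) := by
          intro m
          rw [hterm, integral_cos_pow_even_pi']
          have hfac : (((2*m).factorial : ℝ)) ≠ 0 := by exact_mod_cast (2*m).factorial_ne_zero
          have hx2 : (x / 2) ^ (2 * m) = x ^ (2*m) / 4 ^ m := by
            rw [div_pow]
            congr 1
            rw [pow_mul]
            norm_num
          rw [hx2]
          have h4 : ((4:ℝ)) ^ m ≠ 0 := by positivity
          have hm : ((m.factorial : ℝ)) ≠ 0 := by exact_mod_cast m.factorial_ne_zero
          field_simp
        have hodd : ∀ m : ℕ,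
            (∫ θ in (0:ℝ)..π, (x * Real.cos θ) ^ (2*m+1) / ((2*m+1).factorial : ℝ)) = 0 := by
          intro m
          rw [hterm, integral_cos_pow_odd_pi, mul_zero]
        rw [← tsum_even_add_odd]
        · simp only [heven, hodd, tsum_zero, add_zero, besselI0]
          rw [← tsum_mul_left]
        · apply Summable.congr ((summable_besselI0 x).mul_left π)
          intro m
          exact (heven m).symm
        · exact Summable.congr summable_zero (fun m => (hodd m).symm)
    _ = ∫ θ in (0:ℝ)..π, Real.exp (x * Real.cos θ) := by
        simp only [hIoc]
        rw [hswap]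
        congr 1
        funext θ
        exact (hexp θ).symm

lemma one_le_besselI0 (x : ℝ) : 1 ≤ besselI0 x := by
  have h := Summable.le_tsum (summable_besselI0 x) 0
    (fun j _ => by rw [pow_mul]; positivity)
  simpa [besselI0] using h

lemma besselI0_pos (x : ℝ) : 0 < besselI0 x := lt_of_lt_of_le one_pos (one_le_besselI0 x)

lemma intInt (f : ℝ → ℝ) (hf : Continuous f) (a b : ℝ) :
    IntervalIntegrable (fun θ => Real.exp (f θ)) volume a b :=
  (Real.continuous_exp.comp hf).intervalIntegrable a b

lemma besselI0_le_exp {x : ℝ} (hx : 0 ≤ x) : besselI0 x ≤ Real.exp x := by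
  have h : π * besselI0 x ≤ π * Real.exp x := by
    rw [besselI0_integral]
    calc (∫ θ in (0:ℝ)..π, Real.exp (x * Real.cos θ))
        ≤ ∫ _θ in (0:ℝ)..π, Real.exp x := by
          apply intervalIntegral.integral_mono_on Real.pi_pos.le
            (intInt _ (continuous_const.mul Real.continuous_cos) 0 π)
            (intervalIntegrable_const)
          intro θ _
          apply Real.exp_le_exp.mpr
          calc x * Real.cos θ ≤ x * 1 := by gcongr; exact Real.cos_le_one θ
            _ = x := mul_one x
      _ = π * Real.exp x := by rw [intervalIntegral.integral_const, smul_eq_mul, sub_zero]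
  exact le_of_mul_le_mul_left h Real.pi_pos

lemma besselI0_lower {a b : ℝ} (ha : 0 ≤ a) (hab : a ≤ b) :
    Real.exp (a - b) * besselI0 b ≤ besselI0 a := by
  have h : π * (Real.exp (a - b) * besselI0 b) ≤ π * besselI0 a := by
    rw [mul_left_comm, besselI0_integral, besselI0_integral, ← intervalIntegral.integral_const_mul]
    apply intervalIntegral.integral_mono_on Real.pi_pos.le
      ((intInt _ (continuous_const.mul Real.continuous_cos) 0 π).const_mul _)
      (intInt _ (continuous_const.mul Real.continuous_cos) 0 π)
    intro θ _
    rw [← Real.exp_add]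
    apply Real.exp_le_exp.mpr
    have hc : Real.cos θ ≤ 1 := Real.cos_le_one θ
    simp only [Pi.mul_apply]
    nlinarith
  exact le_of_mul_le_mul_left h Real.pi_pos

lemma besselI0_big {b : ℝ} (hb : 1 ≤ b) :
    Real.exp (b - 1/2) / Real.sqrt b ≤ π * besselI0 b := by
  have hb0 : (0:ℝ) < b := lt_of_lt_of_le one_pos hb
  have hsb : (1:ℝ) ≤ Real.sqrt b := by
    rw [show (1:ℝ) = Real.sqrt 1 by simp]
    exact Real.sqrt_le_sqrt hb
  have hsb0 : (0:ℝ) < Real.sqrt b := lt_of_lt_of_le one_pos hsb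
  set ε : ℝ := (Real.sqrt b)⁻¹ with hε
  have hε0 : 0 < ε := inv_pos.mpr hsb0
  have hε1 : ε ≤ 1 := by
    rw [hε]
    exact inv_le_one_of_one_le₀ hsb
  have hεπ : ε ≤ π := hε1.trans (by linarith [Real.pi_gt_three])
  have hε2 : ε ^ 2 = b⁻¹ := by
    rw [hε, ← Real.sqrt_inv, Real.sq_sqrt (inv_nonneg.mpr hb0.le)]
  rw [besselI0_integral]
  have hsplit : (∫ θ in (0:ℝ)..π, Real.exp (b * Real.cos θ))
      = (∫ θ in (0:ℝ)..ε, Real.exp (b * Real.cos θ))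
        + ∫ θ in ε..π, Real.exp (b * Real.cos θ) :=
    (intervalIntegral.integral_add_adjacent_intervals
      (intInt _ (continuous_const.mul Real.continuous_cos) 0 ε)
      (intInt _ (continuous_const.mul Real.continuous_cos) ε π)).symm
  have h2 : (0:ℝ) ≤ ∫ θ in ε..π, Real.exp (b * Real.cos θ) :=
    intervalIntegral.integral_nonneg hεπ (fun θ _ => (Real.exp_pos _).le)
  have h1 : Real.exp (b - 1/2) / Real.sqrt b ≤ ∫ θ in (0:ℝ)..ε, Real.exp (b * Real.cos θ) := by
    have hconst : (∫ _θ in (0:ℝ)..ε, Real.exp (b - 1/2)) = Real.exp (b - 1/2) / Real.sqrt b := by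
      rw [intervalIntegral.integral_const, smul_eq_mul, sub_zero, hε]
      field_simp
    rw [← hconst]
    apply intervalIntegral.integral_mono_on hε0.le intervalIntegrable_const
      (intInt _ (continuous_const.mul Real.continuous_cos) 0 ε)
    intro θ hθ
    apply Real.exp_le_exp.mpr
    have hcos : 1 - θ^2/2 ≤ Real.cos θ := Real.one_sub_sq_div_two_le_cos
    have hθ2 : θ^2 ≤ ε^2 := by
      apply sq_le_sq'
      · linarith [hθ.1]
      · exact hθ.2
    have : b * (1 - θ^2/2) ≤ b * Real.cos θ := by gcongr
    have hbe : b * ε^2 = 1 := by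
      rw [hε2]
      field_simp
    simp only [Pi.mul_apply]
    nlinarith
  linarith [hsplit, h1, h2]

/-- Fix `R > 0` and for `k > 0` define `y_k(z) = I₀(√k·|z|)/I₀(√k·R)` on `{|z| ≤ R}`.  Then:
(1) for every `k > 0` and `|z| ≤ R`, `e^{−√k·(R−|z|)} ≤ y_k(z)`; and
(2) there are `C > 0`, `k₀ > 0` (depending only on `R`) such that for every `k ≥ k₀` and
`|z| ≤ R`, `y_k(z) ≤ C·k^{1/4}·e^{−√k·(R−|z|)}`. -/
theorem statement8 (R : ℝ) (hR : 0 < R) :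
    (∀ k : ℝ, 0 < k → ∀ z : ℂ, ‖z‖ ≤ R →
      Real.exp (-(Real.sqrt k) * (R - ‖z‖)) ≤ yFun R k z) ∧
    (∃ C : ℝ, 0 < C ∧ ∃ k₀ : ℝ, 0 < k₀ ∧ ∀ k : ℝ, k₀ ≤ k → ∀ z : ℂ, ‖z‖ ≤ R →
      yFun R k z ≤ C * k ^ ((1 : ℝ) / 4) * Real.exp (-(Real.sqrt k) * (R - ‖z‖))) := by
  constructor
  · intro k hk z hz
    set a := Real.sqrt k * ‖z‖ with hadef
    set b := Real.sqrt k * R with hbdef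
    have ha : 0 ≤ a := mul_nonneg (Real.sqrt_nonneg k) (norm_nonneg z)
    have hab : a ≤ b := by
      apply mul_le_mul_of_nonneg_left hz (Real.sqrt_nonneg k)
    have heq : -(Real.sqrt k) * (R - ‖z‖) = a - b := by
      rw [hadef, hbdef]; ring
    rw [heq, yFun, ← hadef, ← hbdef, le_div_iff₀ (besselI0_pos b)]
    exact besselI0_lower ha hab
  · refine ⟨π * Real.exp (1/2) * Real.sqrt R, by positivity, max 1 (1/R^2), by positivity,
      fun k hk z hz => ?_⟩
    have hk1 : (1:ℝ) ≤ k := le_trans (le_max_left _ _) hk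
    have hk0 : (0:ℝ) < k := lt_of_lt_of_le one_pos hk1
    have hkR : 1/R^2 ≤ k := le_trans (le_max_right _ _) hk
    set a := Real.sqrt k * ‖z‖ with hadef
    set b := Real.sqrt k * R with hbdef
    have ha : 0 ≤ a := mul_nonneg (Real.sqrt_nonneg k) (norm_nonneg z)
    have hb1 : (1:ℝ) ≤ b := by
      have h1 : Real.sqrt (1/R^2) ≤ Real.sqrt k := Real.sqrt_le_sqrt hkR
      have h2 : Real.sqrt (1/R^2) = 1/R := by
        rw [one_div, Real.sqrt_inv, Real.sqrt_sq hR.le, one_div]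
      rw [h2] at h1
      calc (1:ℝ) = (1/R) * R := by field_simp
        _ ≤ Real.sqrt k * R := by gcongr
        _ = b := hbdef.symm
    have hab : a ≤ b := mul_le_mul_of_nonneg_left hz (Real.sqrt_nonneg k)
    have hb0 : (0:ℝ) < b := lt_of_lt_of_le one_pos hb1
    have heq : -(Real.sqrt k) * (R - ‖z‖) = a - b := by
      rw [hadef, hbdef]; ring
    rw [heq, yFun, ← hadef, ← hbdef]
    -- lower bound for denominator
    have hD : Real.exp (b - 1/2) / (π * Real.sqrt b) ≤ besselI0 b := by
      have h := besselI0_big hb1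
      rw [div_le_iff₀ (by positivity)] at h ⊢
      calc Real.exp (b - 1/2) ≤ π * besselI0 b * Real.sqrt b := h
        _ = besselI0 b * (π * Real.sqrt b) := by ring
    have hD0 : 0 < Real.exp (b - 1/2) / (π * Real.sqrt b) := by positivity
    have hnum : besselI0 a ≤ Real.exp a := besselI0_le_exp ha
    have hsqrtb : Real.sqrt b = k ^ ((1:ℝ)/4) * Real.sqrt R := by
      rw [hbdef, Real.sqrt_mul (Real.sqrt_nonneg k)]
      congr 1
      rw [Real.sqrt_eq_rpow, Real.sqrt_eq_rpow, ← Real.rpow_mul hk0.le]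
      norm_num
    calc besselI0 a / besselI0 b
        ≤ Real.exp a / (Real.exp (b - 1/2) / (π * Real.sqrt b)) := by
          apply div_le_div₀ (Real.exp_pos a).le hnum hD0 hD
      _ = π * Real.exp (1/2) * Real.sqrt b * Real.exp (a - b) := by
          rw [div_div_eq_mul_div]
          rw [show Real.exp a * (π * Real.sqrt b) = (π * Real.sqrt b) * Real.exp a by ring]
          rw [mul_div_assoc, ← Real.exp_sub]
          rw [show a - (b - 1/2) = 1/2 + (a - b) by ring, Real.exp_add]
          ring
      _ = π * Real.exp (1/2) * Real.sqrt R * k ^ ((1:ℝ)/4) * Real.exp (a - b) := by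
          rw [hsqrtb]; ring
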